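/- Let φ : V → W be a group homomorphism between infinite virtually cyclic groups whose image is infinite. Then φ maps K_V into K_W, and the induced homomorphism φ_Q : V/K_V → W/K_W on the quotients is injective. -/

import Mathlib

/-- A group is virtually cyclic if it contains a cyclic subgroup of finite index. -/
def VirtuallyCyclic (G : Type*) [Group G] : Prop :=
  ∃ H : Subgroup G, IsCyclic ↥H ∧ H.FiniteIndex

/-- An infinite virtually cyclic group is of type I if it admits a surjective
homomorphism onto the infinite cyclic group ℤ. -/
def IsTypeI (G : Type*) [Group G] : Prop :=
  ∃ f : G →* Multiplicative ℤ, Function.Surjective f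

/-- An infinite virtually cyclic group is of type II if it admits a surjective
homomorphism onto the infinite dihedral group D∞. -/
def IsTypeII (G : Type*) [Group G] : Prop :=
  ∃ f : G →* DihedralGroup 0, Function.Surjective f

section Aux

/-- A group generated by an element of finite order is finite. -/
private lemma aux_finite_of_gen_pow {G : Type*} [Group G] (c : G)
    (hgen : ∀ x : G, x ∈ Subgroup.zpowers c) {n : ℕ} (npos : 0 < n) (hn : c ^ n = 1) :
    Finite G := by
  have hsurj : Function.Surjective (fun i : Fin n => c ^ (i : ℕ)) := by
    intro x
    obtain ⟨j, hj⟩ := Subgroup.mem_zpowers_iff.mp (hgen x)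
    have hn' : ((n : ℤ)) ≠ 0 := by exact_mod_cast npos.ne'
    have h0 : 0 ≤ j % n := Int.emod_nonneg j hn'
    have h1 : j % n < n := Int.emod_lt_of_pos j (by exact_mod_cast npos)
    refine ⟨⟨(j % n).toNat, by omega⟩, ?_⟩
    have hz : c ^ ((j % n : ℤ)) = x := by
      have hcn : c ^ ((n : ℤ)) = 1 := by rw [zpow_natCast, hn]
      calc c ^ (j % n) = c ^ (j % n) * (c ^ ((n : ℤ))) ^ (j / n) := by
            rw [hcn, one_zpow, mul_one]
      _ = c ^ (j % n + n * (j / n)) := by rw [← zpow_mul, ← zpow_add]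
      _ = c ^ j := by rw [Int.emod_add_mul_ediv]
      _ = x := hj
    simpa [← zpow_natCast, Int.toNat_of_nonneg h0] using hz
  exact Finite.of_surjective _ hsurj

/-- A nontrivial element of a cyclic finite-index subgroup generates a finite-index
subgroup. -/
private lemma aux_zpowers_finiteIndex {G : Type*} [Group G] (H : Subgroup G)
    [H.FiniteIndex] [IsCyclic ↥H] {g : G} (hg : g ∈ H) (hg1 : g ≠ 1) :
    (Subgroup.zpowers g).FiniteIndex := by
  have hle : Subgroup.zpowers g ≤ H := Subgroup.zpowers_le.mpr hg
  obtain ⟨h, hh⟩ := IsCyclic.exists_generator (α := ↥H)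
  obtain ⟨k, hk⟩ := Subgroup.mem_zpowers_iff.mp (hh ⟨g, hg⟩)
  have hk0 : k ≠ 0 := by
    rintro rfl
    apply hg1
    have := congrArg Subtype.val hk
    simpa using this.symm
  set m : ℕ := k.natAbs with hm
  have hm0 : 0 < m := Int.natAbs_pos.mpr hk0
  have hpow : ((h ^ ((m : ℤ)) : ↥H) : G) ∈ Subgroup.zpowers g := by
    rcases Int.natAbs_eq k with he | he
    · rw [← he, hk]
      exact Subgroup.mem_zpowers g
    · have hmk : ((m : ℤ)) = -k := by omega
      rw [hmk, zpow_neg, hk]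
      exact Subgroup.inv_mem _ (Subgroup.mem_zpowers g)
  have hfin2 : Finite (↥H ⧸ (Subgroup.zpowers g).subgroupOf H) := by
    have hsurj : Function.Surjective (fun i : Fin m =>
        (QuotientGroup.mk (h ^ (i : ℕ)) : ↥H ⧸ (Subgroup.zpowers g).subgroupOf H)) := by
      intro q
      refine QuotientGroup.induction_on q ?_
      intro x
      obtain ⟨j, hj⟩ := Subgroup.mem_zpowers_iff.mp (hh x)
      have hm' : ((m : ℤ)) ≠ 0 := by exact_mod_cast hm0.ne'
      have h0 : 0 ≤ j % m := Int.emod_nonneg j hm'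
      have h1 : j % m < m := Int.emod_lt_of_pos j (by exact_mod_cast hm0)
      refine ⟨⟨(j % m).toNat, by omega⟩, ?_⟩
      refine QuotientGroup.eq.mpr ?_
      rw [Subgroup.mem_subgroupOf]
      have hxeq : (h ^ (((j % m).toNat : ℕ)))⁻¹ * x = (h ^ ((m : ℤ))) ^ (j / m) := by
        rw [← hj, ← zpow_natCast h ((j % m).toNat), Int.toNat_of_nonneg h0,
          ← zpow_neg, ← zpow_mul, ← zpow_add]
        congr 1
        have := Int.emod_add_mul_ediv j m
        linarith
      rw [hxeq]
      exact Subgroup.zpow_mem _ hpow _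
    exact Finite.of_surjective _ hsurj
  have : Finite (G ⧸ Subgroup.zpowers g) :=
    Finite.of_equiv _ (Subgroup.quotientEquivProdOfLE hle).symm
  exact Subgroup.finiteIndex_of_finite_quotient (H := Subgroup.zpowers g)

/-- In a virtually cyclic group, every subgroup is of finite index or finite. -/
private lemma aux_finiteIndex_or_finite {G : Type*} [Group G]
    (hG : VirtuallyCyclic G) (N : Subgroup G) : N.FiniteIndex ∨ Finite N := by
  obtain ⟨H, hcyc, hfi⟩ := hG
  haveI := hfi; haveI := hcyc
  by_cases hb : N ⊓ H = ⊥
  · right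
    have hinj : Function.Injective
        (fun n : ↥N => (QuotientGroup.mk (n : G) : G ⧸ H)) := by
      intro a b hab
      have h1 : ((a : G))⁻¹ * b ∈ H := QuotientGroup.eq.mp hab
      have h2 : ((a : G))⁻¹ * b ∈ N ⊓ H := ⟨N.mul_mem (N.inv_mem a.2) b.2, h1⟩
      rw [hb, Subgroup.mem_bot] at h2
      exact Subtype.ext (inv_mul_eq_one.mp h2)
    exact Finite.of_injective _ hinj
  · left
    obtain ⟨g, hg, hg1⟩ : ∃ g, g ∈ N ⊓ H ∧ g ≠ 1 := by
      by_contra hc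
      push_neg at hc
      exact hb ((Subgroup.eq_bot_iff_forall _).mpr hc)
    haveI := aux_zpowers_finiteIndex H (g := g) hg.2 hg1
    exact Subgroup.finiteIndex_of_le (Subgroup.zpowers_le.mpr hg.1)

/-- A finite-index subgroup of an infinite group is infinite. -/
private lemma aux_infinite_subgroup {G : Type*} [Group G] [Infinite G] (H : Subgroup G)
    [H.FiniteIndex] : Infinite ↥H := by
  rw [← not_finite_iff_infinite]
  intro hfin
  haveI := hfin
  haveI : Finite G := Finite.of_equiv _ (Subgroup.groupEquivQuotientProdSubgroup (s := H)).symm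
  exact not_finite G

end Aux

/-- A homomorphism `φ : V → W` of infinite virtually cyclic groups with infinite image maps
the maximal normal finite subgroup `K_V` into `K_W`, and the induced homomorphism
`V/K_V → W/K_W` is injective. -/
theorem map_maximal_finite_normal_and_injective_on_quotients
    (V W : Type*) [Group V] [Group W] [Infinite V] [Infinite W]
    (hV : VirtuallyCyclic V) (hW : VirtuallyCyclic W)
    (KV : Subgroup V) [KV.Normal] [Finite KV]
    (hKV : ∀ L : Subgroup V, L.Normal → Finite L → L ≤ KV)
    (KW : Subgroup W) [KW.Normal] [Finite KW]
    (hKW : ∀ L : Subgroup W, L.Normal → Finite L → L ≤ KW)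
    (φ : V →* W) (him : Infinite φ.range) :
    ∃ h : KV ≤ KW.comap φ, Function.Injective (QuotientGroup.map KV KW φ h) := by
  classical
  -- Part 1: the image of `KV` is contained in `KW`.
  obtain ⟨HW, hcycW, hfiW⟩ := hW
  haveI := hfiW; haveI := hcycW
  set R : Subgroup W := φ.range with hR
  haveI hRfi : R.FiniteIndex := by
    rcases aux_finiteIndex_or_finite ⟨HW, hcycW, hfiW⟩ R with h | h
    · exact h
    · exact absurd h (by rw [not_finite_iff_infinite]; exact him)
  set C₀ : Subgroup W := HW ⊓ R with hC₀
  haveI : C₀.FiniteIndex := inferInstance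
  set C₁ : Subgroup W := C₀.normalCore with hC₁
  haveI hC₁fi : C₁.FiniteIndex := inferInstance
  haveI hC₁n : C₁.Normal := inferInstance
  have hC₁HW : C₁ ≤ HW := C₀.normalCore_le.trans inf_le_left
  have hC₁R : C₁ ≤ R := C₀.normalCore_le.trans inf_le_right
  haveI : IsCyclic ↥C₁ := by
    have e := Subgroup.subgroupOfEquivOfLe hC₁HW
    exact isCyclic_of_surjective e e.surjective
  haveI : Infinite ↥C₁ := aux_infinite_subgroup C₁
  obtain ⟨c₀, hc₀⟩ := IsCyclic.exists_generator (α := ↥C₁)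
  set c : W := (c₀ : W) with hc
  have hcC₁ : c ∈ C₁ := c₀.2
  have hgenC : ∀ x ∈ C₁, ∃ k : ℤ, c ^ k = x := by
    intro x hx
    obtain ⟨k, hk⟩ := Subgroup.mem_zpowers_iff.mp (hc₀ ⟨x, hx⟩)
    refine ⟨k, ?_⟩
    have := congrArg Subtype.val hk
    simpa [Subgroup.coe_zpow] using this
  have hctor : ¬ IsOfFinOrder c := by
    intro h
    obtain ⟨p, hp0, hp1⟩ := isOfFinOrder_iff_pow_eq_one.mp h
    have hc₀p : c₀ ^ p = 1 := Subtype.ext (by simpa using hp1)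
    haveI := aux_finite_of_gen_pow c₀ hc₀ hp0 hc₀p
    exact not_finite ↥C₁
  set F : Subgroup W := KV.map φ with hF
  have hFfin : Finite ↥F := by
    have h1 : ((F : Set W)).Finite := by
      rw [hF, Subgroup.coe_map]
      exact ((KV : Set V).toFinite).image φ
    exact h1.to_subtype
  haveI := hFfin
  have hconjF : ∀ w : W, w ∈ R → ∀ x ∈ F, w * x * w⁻¹ ∈ F := by
    rintro w ⟨v, rfl⟩ x hx
    obtain ⟨u, hu, rfl⟩ := hx
    exact ⟨v * u * v⁻¹, (inferInstance : KV.Normal).conj_mem u hu v, by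
      simp [map_mul]⟩
  have hcR : c ∈ R := hC₁R hcC₁
  -- pigeonhole: some positive power of `c` commutes with all of `F`
  obtain ⟨k₁, k₂, hk12, hstep⟩ : ∃ k₁ k₂ : ℕ, k₁ ≠ k₂ ∧
      ∀ x ∈ F, c ^ k₁ * x * (c ^ k₁)⁻¹ = c ^ k₂ * x * (c ^ k₂)⁻¹ := by
    obtain ⟨k₁, k₂, h12, heq⟩ := Finite.exists_ne_map_eq_of_infinite
      (fun k : ℕ => (fun f : ↥F =>
        (⟨c ^ k * (f : W) * (c ^ k)⁻¹, hconjF _ (R.pow_mem hcR k) _ f.2⟩ : ↥F)))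
    exact ⟨k₁, k₂, h12, fun x hx => congrArg Subtype.val (congrFun heq ⟨x, hx⟩)⟩
  have hswap : ∀ a b : ℕ, a < b →
      (∀ x ∈ F, c ^ a * x * (c ^ a)⁻¹ = c ^ b * x * (c ^ b)⁻¹) →
      ∃ d : ℕ, 0 < d ∧ ∀ x ∈ F, c ^ d * x = x * c ^ d := by
    intro a b hab hEq
    set e : ℕ := b - a with he
    have hbe : b = a + e := by omega
    refine ⟨e, by omega, fun x hx => ?_⟩
    have h1' : c ^ a * x * (c ^ a)⁻¹
        = c ^ e * (c ^ a * x * (c ^ a)⁻¹) * (c ^ e)⁻¹ := by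
      conv_lhs => rw [hEq x hx, hbe, pow_add]
      group
    have hy : Commute (c ^ e) (c ^ a * x * (c ^ a)⁻¹) :=
      (eq_mul_inv_iff_mul_eq.mp h1').symm
    have hx' : x = (c ^ a)⁻¹ * (c ^ a * x * (c ^ a)⁻¹) * c ^ a := by group
    rw [hx']
    exact ((((Commute.refl c).pow_pow e a).inv_right.mul_right hy).mul_right
      ((Commute.refl c).pow_pow e a)).eq
  obtain ⟨d, hd0, hd⟩ : ∃ d : ℕ, 0 < d ∧ ∀ x ∈ F, c ^ d * x = x * c ^ d := by
    rcases hk12.lt_or_gt with hlt | hlt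
    · exact hswap _ _ hlt hstep
    · exact hswap _ _ hlt (fun x hx => (hstep x hx).symm)
  set c' : W := c ^ d with hc'
  have hc'C₁ : c' ∈ C₁ := C₁.pow_mem hcC₁ d
  have hc'tor : ¬ IsOfFinOrder c' := fun h => hctor (h.of_pow hd0.ne')
  have hc'1 : c' ≠ 1 := by
    intro h
    exact hctor (isOfFinOrder_iff_pow_eq_one.mpr ⟨d, hd0, h⟩)
  have hc'conj : ∀ w : W, w * c' * w⁻¹ ∈ Subgroup.zpowers c' := by
    intro w
    have h1 : w * c * w⁻¹ ∈ C₁ := hC₁n.conj_mem c hcC₁ w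
    obtain ⟨k, hk⟩ := hgenC _ h1
    have h2 : w * c' * w⁻¹ = (c ^ k) ^ (d : ℕ) := by
      rw [hk, hc', conj_pow]
    refine Subgroup.mem_zpowers_iff.mpr ⟨k, ?_⟩
    rw [h2, hc', ← zpow_natCast (c ^ k) d, ← zpow_mul, ← zpow_natCast c d,
      ← zpow_mul, mul_comm]
  haveI hC'n : (Subgroup.zpowers c').Normal := by
    constructor
    intro n hn g
    obtain ⟨j, hj⟩ := Subgroup.mem_zpowers_iff.mp hn
    obtain ⟨i, hi⟩ := Subgroup.mem_zpowers_iff.mp (hc'conj g)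
    have h3 : g * n * g⁻¹ = (c' ^ (i : ℤ)) ^ j := by
      rw [← hj, hi, conj_zpow]
    rw [h3]
    exact Subgroup.zpow_mem _ (Subgroup.zpow_mem _ (Subgroup.mem_zpowers c') i) j
  haveI hC'fi : (Subgroup.zpowers c').FiniteIndex :=
    aux_zpowers_finiteIndex C₁ hc'C₁ hc'1
  -- the centralizer of `zpowers c'`
  set Z : Subgroup W := Subgroup.centralizer ((Subgroup.zpowers c' : Subgroup W) : Set W)
    with hZ
  have hC'Z : Subgroup.zpowers c' ≤ Z := by
    intro x hx
    rw [hZ, Subgroup.mem_centralizer_iff]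
    intro h hh
    obtain ⟨a, rfl⟩ := Subgroup.mem_zpowers_iff.mp hx
    obtain ⟨b, rfl⟩ := Subgroup.mem_zpowers_iff.mp hh
    exact ((Commute.refl c').zpow_zpow b a).eq
  haveI : ((Subgroup.zpowers c').subgroupOf Z).FiniteIndex := by
    constructor
    intro h0
    have hmul := Subgroup.relIndex_mul_index hC'Z
    rw [show ((Subgroup.zpowers c').subgroupOf Z).index
        = (Subgroup.zpowers c').relIndex Z from rfl] at h0
    rw [h0, zero_mul] at hmul
    exact hC'fi.index_ne_zero hmul.symm
  have hsubZ : (Subgroup.zpowers c').subgroupOf Z ≤ Subgroup.center ↥Z := by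
    intro z hz
    rw [Subgroup.mem_center_iff]
    intro g
    have hg : ∀ u ∈ Subgroup.zpowers c', u * (g : W) = (g : W) * u :=
      Subgroup.mem_centralizer_iff.mp g.2
    exact Subtype.ext (hg (↑z) (Subgroup.mem_subgroupOf.mp hz)).symm
  haveI : (Subgroup.center ↥Z).FiniteIndex := Subgroup.finiteIndex_of_le hsubZ
  set τ := MonoidHom.transferCenterPow ↥Z with hτ
  open scoped IsMulCommutative in
  set K : Subgroup ↥Z := (CommGroup.torsion ↥(Subgroup.center ↥Z)).comap τ with hK
  set KW' : Subgroup W := K.map Z.subtype with hKW'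
  have hconjsub : Group.conjugatesOfSet (F : Set W) ⊆ (KW' : Set W) := by
    intro x hx
    obtain ⟨a, haF, hconj⟩ := Group.mem_conjugatesOfSet_iff.mp hx
    obtain ⟨w, hw⟩ := isConj_iff.mp hconj
    have haf : IsOfFinOrder a := by
      have h1 : IsOfFinOrder (⟨a, haF⟩ : ↥F) := isOfFinOrder_of_finite _
      obtain ⟨p, hp0, hp1⟩ := isOfFinOrder_iff_pow_eq_one.mp h1
      exact isOfFinOrder_iff_pow_eq_one.mpr
        ⟨p, hp0, by simpa using congrArg Subtype.val hp1⟩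
    have hxf : IsOfFinOrder x := by
      obtain ⟨p, hp0, hp1⟩ := isOfFinOrder_iff_pow_eq_one.mp haf
      refine isOfFinOrder_iff_pow_eq_one.mpr ⟨p, hp0, ?_⟩
      rw [← hw, conj_pow, hp1, mul_one, mul_inv_cancel]
    have hxZ : x ∈ Z := by
      rw [hZ, Subgroup.mem_centralizer_iff]
      intro h hh
      have h2 : w⁻¹ * h * w ∈ Subgroup.zpowers c' := by
        have := hC'n.conj_mem h hh w⁻¹
        simpa using this
      obtain ⟨i, hi⟩ := Subgroup.mem_zpowers_iff.mp h2
      have hc'a : Commute c' a := hd a haF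
      have hha : (w⁻¹ * h * w) * a = a * (w⁻¹ * h * w) := by
        rw [← hi]
        exact (hc'a.zpow_left i).eq
      have hw' : h = w * (w⁻¹ * h * w) * w⁻¹ := by group
      rw [hw', ← hw]
      calc (w * (w⁻¹ * h * w) * w⁻¹) * (w * a * w⁻¹)
          = w * ((w⁻¹ * h * w) * a) * w⁻¹ := by group
        _ = w * (a * (w⁻¹ * h * w)) * w⁻¹ := by rw [hha]
        _ = (w * a * w⁻¹) * (w * (w⁻¹ * h * w) * w⁻¹) := by group
    refine ⟨⟨x, hxZ⟩, ?_, rfl⟩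
    rw [hK, SetLike.mem_coe, Subgroup.mem_comap]
    open scoped IsMulCommutative in
    apply (CommGroup.mem_torsion _).mpr
    apply τ.isOfFinOrder
    obtain ⟨p, hp0, hp1⟩ := isOfFinOrder_iff_pow_eq_one.mp hxf
    exact isOfFinOrder_iff_pow_eq_one.mpr
      ⟨p, hp0, Subtype.ext (by simpa using hp1)⟩
  set N : Subgroup W := Subgroup.normalClosure (F : Set W) with hN
  have hNK : N ≤ KW' := (Subgroup.closure_le _).mpr hconjsub
  haveI : Finite (W ⧸ Subgroup.zpowers c') := inferInstance
  have hkey : ∀ x : W, x ∈ Subgroup.zpowers c' → x ∈ N → x = 1 := by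
    intro x hxC hxN
    obtain ⟨z, hzK, hzx⟩ := hNK hxN
    have htor : IsOfFinOrder (τ z) :=
      open scoped IsMulCommutative in (CommGroup.mem_torsion _).mp (Subgroup.mem_comap.mp hzK)
    obtain ⟨p, hp0, hp1⟩ := isOfFinOrder_iff_pow_eq_one.mp htor
    set n : ℕ := (Subgroup.center ↥Z).index with hn
    have hn0 : n ≠ 0 :=
      (inferInstance : (Subgroup.center ↥Z).FiniteIndex).index_ne_zero
    have hz1 : ((z : ↥Z) : W) ^ (n * p) = 1 := by
      have e1 : (((τ z : ↥Z)) : W) ^ p = 1 := by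
        have h2 := congrArg (fun t : ↥(Subgroup.center ↥Z) => ((t : ↥Z) : W)) hp1
        simpa using h2
      have e2 : ((τ z : ↥Z) : W) = ((z : ↥Z) : W) ^ n := by
        have h3 : ((τ z : ↥Z)) = (z : ↥Z) ^ ((Subgroup.center ↥Z).index) :=
          MonoidHom.transferCenterPow_apply (G := ↥Z) z
        rw [hn]
        exact congrArg Subtype.val h3
      rw [e2] at e1
      rw [pow_mul]
      exact e1
    have hx1 : x ^ (n * p) = 1 := by
      rw [← hzx]
      exact hz1
    obtain ⟨j, hj⟩ := Subgroup.mem_zpowers_iff.mp hxC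
    by_cases hj0 : j = 0
    · rw [← hj, hj0, zpow_zero]
    · exfalso
      apply hc'tor
      have h3 : c' ^ (j * ((n * p : ℕ) : ℤ)) = 1 := by
        rw [zpow_mul, hj, zpow_natCast, hx1]
      set t : ℤ := j * ((n * p : ℕ) : ℤ) with ht
      have ht0 : t ≠ 0 := by
        refine mul_ne_zero hj0 ?_
        exact_mod_cast Nat.mul_ne_zero hn0 hp0.ne'
      refine isOfFinOrder_iff_pow_eq_one.mpr ⟨t.natAbs, Int.natAbs_pos.mpr ht0, ?_⟩
      rcases Int.natAbs_eq t with he | he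
      · rw [← zpow_natCast, ← he, h3]
      · have h4 : ((t.natAbs : ℤ)) = -t := by omega
        rw [← zpow_natCast, h4, zpow_neg, h3, inv_one]
  have hNfin : Finite ↥N := by
    refine Finite.of_injective
      (fun nn : ↥N => (QuotientGroup.mk (nn : W) : W ⧸ Subgroup.zpowers c')) ?_
    intro a b hab
    have h1 := QuotientGroup.eq.mp hab
    have h2 : ((a : W))⁻¹ * b ∈ N := N.mul_mem (N.inv_mem a.2) b.2
    exact Subtype.ext (inv_mul_eq_one.mp (hkey _ h1 h2))
  haveI : N.Normal := Subgroup.normalClosure_normal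
  have hNKW : N ≤ KW := hKW N inferInstance hNfin
  have h1 : KV ≤ KW.comap φ := by
    intro v hv
    rw [Subgroup.mem_comap]
    exact hNKW (Subgroup.subset_normalClosure (Subgroup.mem_map.mpr ⟨v, hv, rfl⟩))
  -- Part 2: the preimage of `KW` is contained in `KV`.
  have hker : Finite ↥φ.ker := by
    rcases aux_finiteIndex_or_finite hV φ.ker with hfi | hfin
    · exfalso
      haveI := hfi
      haveI : Infinite (V ⧸ φ.ker) :=
        (QuotientGroup.quotientKerEquivRange φ).toEquiv.infinite_iff.mpr him
      exact not_finite (V ⧸ φ.ker)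
    · exact hfin
  set M : Subgroup V := KW.comap φ with hM
  haveI : M.Normal := Subgroup.normal_comap φ
  have hMfin : Finite ↥M := by
    let ψ : ↥M →* ↥KW := (φ.comp M.subtype).codRestrict KW (fun x => x.2)
    haveI : Finite ↥ψ.ker := by
      haveI := hker
      refine Finite.of_injective (fun x : ↥ψ.ker =>
        (⟨((x : ↥M) : V), ?_⟩ : ↥φ.ker)) ?_
      · exact MonoidHom.mem_ker.mpr (congrArg Subtype.val (MonoidHom.mem_ker.mp x.2))
      · intro a b h
        exact Subtype.ext (Subtype.ext (congrArg (fun y : ↥φ.ker => (y : V)) h))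
    haveI : Finite (↥M ⧸ ψ.ker) :=
      Finite.of_equiv _ (QuotientGroup.quotientKerEquivRange ψ).symm.toEquiv
    exact Finite.of_equiv _ (Subgroup.groupEquivQuotientProdSubgroup (s := ψ.ker)).symm
  have hMKV : M ≤ KV := hKV M inferInstance hMfin
  -- Conclusion
  refine ⟨h1, ?_⟩
  rw [injective_iff_map_eq_one]
  intro x
  refine QuotientGroup.induction_on x ?_
  intro v hv
  rw [QuotientGroup.map_mk, QuotientGroup.eq_one_iff] at hv
  exact (QuotientGroup.eq_one_iff v).mpr (hMKV hv)
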